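/- Let η⋆_w, η⋆_{w'}, δ⋆_{w'} : U → [0,1] be measurable with |η⋆_w(u) − η⋆_{w'}(u)| ≤ ε_w for all u, and δ⋆_{w'}(u) ≤ U_X with U_X > 0. Define ω_w = E[η⋆_w], κ1' = E[η⋆_{w'}δ⋆_{w'}], χ' = E[δ⋆_{w'}]. Then ω_w ≥ (κ1' − ε_w·χ') / U_X. -/
import Mathlib


open MeasureTheory

/-- First cross-w bound of Theorem 2 of Silva–Evans: if `|η⋆_w - η⋆_{w'}| ≤ ε_w` pointwise
and `δ⋆_{w'} ≤ U_X` pointwise with `U_X > 0`, then with `ω_w = E[η⋆_w]`,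
`κ₁' = E[η⋆_{w'}δ⋆_{w'}]`, `χ' = E[δ⋆_{w'}]`, one has `ω_w ≥ (κ₁' - ε_w·χ')/U_X`. -/
theorem stmt5 {U : Type*} [MeasurableSpace U] (P : Measure U) [IsProbabilityMeasure P]
    (ηw ηw' δw' : U → ℝ) (hη1 : Measurable ηw) (hη2 : Measurable ηw') (hδ : Measurable δw')
    (hηw : ∀ u, ηw u ∈ Set.Icc (0:ℝ) 1) (hηw' : ∀ u, ηw' u ∈ Set.Icc (0:ℝ) 1)
    (hδw' : ∀ u, δw' u ∈ Set.Icc (0:ℝ) 1)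
    (εw UX : ℝ) (hUX : 0 < UX)
    (hcross : ∀ u, |ηw u - ηw' u| ≤ εw)
    (hδU : ∀ u, δw' u ≤ UX) :
    ((∫ u, ηw' u * δw' u ∂P) - εw * ∫ u, δw' u ∂P) / UX ≤ ∫ u, ηw u ∂P := by
  have bound : ∀ (f : U → ℝ), Measurable f → (∀ u, |f u| ≤ 1) → Integrable f P := by
    intro f hf hb
    exact (integrable_const (1:ℝ)).mono' hf.aestronglyMeasurable
      (Filter.Eventually.of_forall fun u => by simpa using hb u)
  have habs : ∀ (f : U → ℝ), (∀ u, f u ∈ Set.Icc (0:ℝ) 1) → ∀ u, |f u| ≤ 1 := by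
    intro f hf u
    rw [abs_le]; constructor <;> [linarith [(hf u).1]; exact (hf u).2]
  have iη : Integrable ηw P := bound _ hη1 (habs _ hηw)
  have iδ : Integrable δw' P := bound _ hδ (habs _ hδw')
  have iηδ : Integrable (fun u => ηw' u * δw' u) P := by
    refine bound _ (hη2.mul hδ) fun u => ?_
    rw [abs_mul]
    exact mul_le_one₀ (habs _ hηw' u) (abs_nonneg _) (habs _ hδw' u)
  rw [div_le_iff₀ hUX]
  have step1 : (∫ u, ηw' u * δw' u ∂P) - εw * ∫ u, δw' u ∂P
      ≤ ∫ u, ηw u * δw' u ∂P := by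
    rw [← integral_const_mul, ← integral_sub iηδ (iδ.const_mul εw)]
    refine integral_mono (iηδ.sub (iδ.const_mul εw)) (bound _ (hη1.mul hδ) fun u => by
      rw [abs_mul]
      exact mul_le_one₀ (habs _ hηw u) (abs_nonneg _) (habs _ hδw' u)) fun u => ?_
    have h1 : ηw' u - εw ≤ ηw u := by
      have := abs_le.mp (hcross u); linarith [this.1, this.2]
    have h2 : (0:ℝ) ≤ δw' u := (hδw' u).1
    simp only
    calc ηw' u * δw' u - εw * δw' u = (ηw' u - εw) * δw' u := by ring
    _ ≤ ηw u * δw' u := mul_le_mul_of_nonneg_right h1 h2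
  have step2 : ∫ u, ηw u * δw' u ∂P ≤ (∫ u, ηw u ∂P) * UX := by
    rw [← integral_mul_const]
    refine integral_mono (bound _ (hη1.mul hδ) fun u => by
      rw [abs_mul]
      exact mul_le_one₀ (habs _ hηw u) (abs_nonneg _) (habs _ hδw' u))
      (iη.mul_const UX) fun u => ?_
    exact mul_le_mul_of_nonneg_left (hδU u) (hηw u).1
  linarith
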